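/- Let F be a free group, m ≥ 1, and H a subgroup of F. If H is dense in the pro-Ab(p) topology on F for every prime p dividing m, then H is dense in the pro-Ab(m) topology on F. -/

import Mathlib

open Pointwise
open scoped commutatorElement

/-- `H` is dense in the pro-`Ab(k)` topology on the free group on `A`:
`HN = F` for every normal subgroup `N` such that `F/N` is a finite abelian
group of exponent dividing `k`. -/
def AbmDense (A : Type*) (k : ℕ) (H : Subgroup (FreeGroup A)) : Prop :=
  ∀ N : Subgroup (FreeGroup A), N.Normal → N.index ≠ 0 →
    commutator (FreeGroup A) ≤ N → (∀ g : FreeGroup A, g ^ k ∈ N) →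
      (H : Set (FreeGroup A)) * (N : Set (FreeGroup A)) = Set.univ

/-- If `H` is dense in the pro-`Ab(p)` topology on a free
group `F` for every prime `p` dividing `m`, then `H` is dense in the
pro-`Ab(m)` topology. -/
theorem abp_dense_imp_abm_dense (A : Type*) (m : ℕ) (hm : 1 ≤ m)
    (H : Subgroup (FreeGroup A))
    (hdense : ∀ p : ℕ, p.Prime → p ∣ m → AbmDense A p H) :
    AbmDense A m H := by
  classical
  intro N hN hNidx hNcomm hNpow
  have _ : N.Normal := hN
  rw [← Subgroup.mul_normal H N]
  set K : Subgroup (FreeGroup A) := H ⊔ N with hK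
  suffices hsuff : K = ⊤ by rw [hsuff]; rfl
  by_contra hKne
  have hNK : N ≤ K := le_sup_right
  have hHK : H ≤ K := le_sup_left
  have hcommK : commutator (FreeGroup A) ≤ K := hNcomm.trans hNK
  -- K is normal since it contains the commutator subgroup
  have hKn : K.Normal := by
    constructor
    intro n hn g
    have h1 : ⁅g, n⁆ ∈ K := by
      apply hcommK
      exact Subgroup.commutator_mem_commutator (Subgroup.mem_top g) (Subgroup.mem_top n)
    have h2 : g * n * g⁻¹ = ⁅g, n⁆ * n := by
      rw [commutatorElement_def]; group
    rw [h2]; exact K.mul_mem h1 hn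
  have hKidx : K.index ≠ 0 := fun h0 =>
    hNidx (Nat.eq_zero_of_zero_dvd (h0 ▸ Subgroup.index_dvd_of_le hNK))
  have : K.FiniteIndex := ⟨hKidx⟩
  -- the quotient Q := F ⧸ K is a finite nontrivial group of exponent dividing m
  set Q := FreeGroup A ⧸ K with hQ
  have hfin : Finite Q := Subgroup.finite_quotient_of_finiteIndex (H := K)
  have hcomm : ∀ a b : Q, a * b = b * a := by
    intro a b
    induction a using QuotientGroup.induction_on
    induction b using QuotientGroup.induction_on
    rename_i x y
    show QuotientGroup.mk (x * y) = QuotientGroup.mk (y * x)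
    rw [QuotientGroup.eq]
    have : (x * y)⁻¹ * (y * x) = ⁅y⁻¹, x⁻¹⁆ := by
      rw [commutatorElement_def]; group
    rw [this]
    exact hcommK (Subgroup.commutator_mem_commutator (Subgroup.mem_top _) (Subgroup.mem_top _))
  letI : CommGroup Q := { (inferInstance : Group Q) with mul_comm := hcomm }
  have hntriv : Nontrivial Q := by
    obtain ⟨g, hg⟩ : ∃ g, g ∉ K := by
      by_contra h
      push_neg at h
      exact hKne (Subgroup.eq_top_iff' K |>.mpr h)
    exact ⟨⟨QuotientGroup.mk g, 1, fun h => hg ((QuotientGroup.eq_one_iff g).mp h)⟩⟩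
  have hexp : ∀ q : Q, q ^ m = 1 := by
    intro q
    induction q using QuotientGroup.induction_on
    rename_i x
    show QuotientGroup.mk (x : FreeGroup A) ^ m = 1
    rw [← QuotientGroup.mk_pow, QuotientGroup.eq_one_iff]
    exact hNK (hNpow x)
  -- structure theorem
  obtain ⟨ι, hι, n, hn1, ⟨e⟩⟩ := CommGroup.equiv_prod_multiplicative_zmod_of_finite Q
  have hιne : Nonempty ι := by
    by_contra hempty
    have : IsEmpty ι := not_nonempty_iff.mp hempty
    have : Subsingleton ((i : ι) → Multiplicative (ZMod (n i))) := inferInstance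
    have : Subsingleton Q := e.toEquiv.subsingleton
    exact (not_subsingleton_iff_nontrivial.mpr hntriv) this
  obtain ⟨i⟩ := hιne
  -- n i divides m
  have hnim : n i ∣ m := by
    set x : Q := e.symm (Pi.mulSingle i (Multiplicative.ofAdd (1 : ZMod (n i)))) with hx
    have hord : orderOf x = n i := by
      classical
      rw [hx, MulEquiv.orderOf_eq, orderOf_piMulSingle,
        orderOf_ofAdd_eq_addOrderOf, ZMod.addOrderOf_one]
    rw [← hord]
    exact orderOf_dvd_of_pow_eq_one (hexp x)
  set p := (n i).minFac with hp
  have hpprime : p.Prime := Nat.minFac_prime (Nat.ne_of_gt (hn1 i))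
  have hpm : p ∣ m := (Nat.minFac_dvd (n i)).trans hnim
  haveI : Fact p.Prime := ⟨hpprime⟩
  -- build the homomorphism F → Multiplicative (ZMod p)
  have hpd : p ∣ n i := Nat.minFac_dvd (n i)
  haveI : NeZero (n i) := ⟨by have := hn1 i; omega⟩
  let π : Multiplicative (ZMod (n i)) →* Multiplicative (ZMod p) :=
    AddMonoidHom.toMultiplicative (ZMod.castHom hpd (ZMod p)).toAddMonoidHom
  let f : FreeGroup A →* Multiplicative (ZMod p) :=
    π.comp ((Pi.evalMonoidHom (fun j => Multiplicative (ZMod (n j))) i).comp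
      (e.toMonoidHom.comp (QuotientGroup.mk' K)))
  have hfsurj : Function.Surjective f := by
    intro y
    obtain ⟨k, hk⟩ := ZMod.natCast_zmod_surjective (n := p) y.toAdd
    refine ⟨Quotient.out (e.symm (Pi.mulSingle i (Multiplicative.ofAdd ((k : ZMod (n i)))))), ?_⟩
    show π ((e (QuotientGroup.mk (Quotient.out
      (e.symm (Pi.mulSingle i (Multiplicative.ofAdd ((k : ZMod (n i))))))))) i) = y
    rw [QuotientGroup.out_eq', MulEquiv.apply_symm_apply]
    classical
    rw [Pi.mulSingle_eq_same]
    show Multiplicative.ofAdd (ZMod.castHom hpd (ZMod p) ((k : ZMod (n i)))) = y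
    rw [map_natCast, hk]
    exact ofAdd_toAdd y
  have hKker : K ≤ f.ker := by
    intro g hg
    show f g = 1
    have : (QuotientGroup.mk' K) g = 1 := (QuotientGroup.eq_one_iff g).mpr hg
    show π ((e ((QuotientGroup.mk' K) g)) i) = 1
    rw [this, map_one]
    show π 1 = 1
    rw [map_one]
  -- f.ker satisfies the conditions for Ab(p)-density
  have hkeridx : f.ker.index = p := by
    rw [Subgroup.index_ker, MonoidHom.range_eq_top.mpr hfsurj]
    rw [Nat.card_congr Subgroup.topEquiv.toEquiv]
    show Nat.card (Multiplicative (ZMod p)) = p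
    rw [Nat.card_congr (Multiplicative.toAdd (α := ZMod p)), Nat.card_zmod]
  have hkerpow : ∀ g : FreeGroup A, g ^ p ∈ f.ker := by
    intro g
    show f (g ^ p) = 1
    rw [map_pow]
    have : Multiplicative.toAdd ((f g) ^ p) = 0 := by
      rw [toAdd_pow, nsmul_eq_mul, ZMod.natCast_self, zero_mul]
    calc f g ^ p = Multiplicative.ofAdd (Multiplicative.toAdd (f g ^ p)) := (ofAdd_toAdd _).symm
      _ = 1 := by rw [this]; rfl
  have hker := hdense p hpprime hpm f.ker (MonoidHom.normal_ker f)
    (by rw [hkeridx]; exact hpprime.ne_zero) (hNcomm.trans ((hNK.trans hKker)))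
    hkerpow
  rw [← Subgroup.mul_normal H f.ker, sup_of_le_right (hHK.trans hKker)] at hker
  have : f.ker = ⊤ := SetLike.coe_injective (by rw [hker]; rfl)
  rw [this, Subgroup.index_top] at hkeridx
  exact hpprime.one_lt.ne hkeridx
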